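/- Let G be a torsion group and let i and j be involutions in G. Then either there exists an involution k in G commuting with both i and j, or there exists a nontrivial element z in G such that z⁻¹·j·z = i and z² = j·i. -/
import Mathlib


/-- In any torsion group, for any two involutions `i` and `j`, either there is an
involution commuting with both, or there is a nontrivial element `z` with
`z⁻¹ * j * z = i` and `z ^ 2 = j * i`. -/
theorem involutions_commuting_or_conjugating {G : Type*} [Group G]
    (hG : Monoid.IsTorsion G) (i j : G)
    (hi1 : i ≠ 1) (hi2 : i ^ 2 = 1) (hj1 : j ≠ 1) (hj2 : j ^ 2 = 1) :
    (∃ k : G, k ≠ 1 ∧ k ^ 2 = 1 ∧ Commute k i ∧ Commute k j) ∨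
    (∃ z : G, z ≠ 1 ∧ z⁻¹ * j * z = i ∧ z ^ 2 = j * i) := by
  have hii : i * i = 1 := by rw [← sq]; exact hi2
  have hjj : j * j = 1 := by rw [← sq]; exact hj2
  have hiinv : i⁻¹ = i := inv_eq_of_mul_eq_one_left hii
  have hjinv : j⁻¹ = j := inv_eq_of_mul_eq_one_left hjj
  by_cases hij : i = j
  · exact Or.inl ⟨i, hi1, hi2, Commute.refl i, hij ▸ Commute.refl i⟩
  set t := j * i with ht
  have ht1 : t ≠ 1 := by
    intro h
    apply hij
    have : j = i⁻¹ := eq_inv_of_mul_eq_one_left h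
    rw [hiinv] at this
    exact this.symm
  have hconj_i : ∀ k : ℕ, i * t ^ k * i⁻¹ = (t ^ k)⁻¹ := by
    intro k
    rw [← conj_pow, ← inv_pow]
    congr 1
    rw [ht, hiinv]
    calc i * (j * i) * i = i * j * (i * i) := by group
      _ = i * j := by rw [hii, mul_one]
      _ = i⁻¹ * j⁻¹ := by rw [hiinv, hjinv]
      _ = (j * i)⁻¹ := by rw [mul_inv_rev]
  have hconj_j : ∀ k : ℕ, j * t ^ k * j⁻¹ = (t ^ k)⁻¹ := by
    intro k
    rw [← conj_pow, ← inv_pow]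
    congr 1
    rw [ht, hjinv]
    calc j * (j * i) * j = (j * j) * (i * j) := by group
      _ = i * j := by rw [hjj, one_mul]
      _ = i⁻¹ * j⁻¹ := by rw [hiinv, hjinv]
      _ = (j * i)⁻¹ := by rw [mul_inv_rev]
  have hfin : IsOfFinOrder t := hG t
  set n := orderOf t with hn
  have hnpos : 0 < n := hfin.orderOf_pos
  have hn1 : n ≠ 1 := by
    intro h
    exact ht1 (orderOf_eq_one_iff.mp h)
  have hn2 : 2 ≤ n := by omega
  have htn : t ^ n = 1 := pow_orderOf_eq_one t
  rcases Nat.even_or_odd n with ⟨m, hm⟩ | ⟨m, hm⟩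
  · -- even case
    left
    refine ⟨t ^ m, ?_, ?_, ?_, ?_⟩
    · intro h
      have hdvd : n ∣ m := orderOf_dvd_of_pow_eq_one h
      have := Nat.le_of_dvd (by omega) hdvd
      omega
    · rw [← pow_mul]
      have : m * 2 = n := by omega
      rw [this, htn]
    · have h1 := hconj_i m
      have hk2 : (t ^ m)⁻¹ = t ^ m := by
        apply inv_eq_of_mul_eq_one_left
        rw [← pow_add]
        have : m + m = n := by omega
        rw [this, htn]
      rw [hk2, hiinv] at h1
      calc t ^ m * i = i * t ^ m * i * i := by rw [h1]
        _ = i * t ^ m * (i * i) := by rw [mul_assoc]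
        _ = i * t ^ m := by rw [hii, mul_one]
    · have h1 := hconj_j m
      have hk2 : (t ^ m)⁻¹ = t ^ m := by
        apply inv_eq_of_mul_eq_one_left
        rw [← pow_add]
        have : m + m = n := by omega
        rw [this, htn]
      rw [hk2, hjinv] at h1
      calc t ^ m * j = j * t ^ m * j * j := by rw [h1]
        _ = j * t ^ m * (j * j) := by rw [mul_assoc]
        _ = j * t ^ m := by rw [hjj, mul_one]
  · -- odd case
    right
    refine ⟨t ^ (m + 1), ?_, ?_, ?_⟩
    · intro h
      have hdvd : n ∣ m + 1 := orderOf_dvd_of_pow_eq_one h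
      have := Nat.le_of_dvd (by omega) hdvd
      omega
    · -- z⁻¹ * j * z = i
      have h1 := hconj_j (m + 1)
      rw [hjinv] at h1
      have h2 : j * t ^ (m + 1) = (t ^ (m + 1))⁻¹ * j := by
        calc j * t ^ (m + 1) = j * t ^ (m + 1) * (j * j) := by rw [hjj, mul_one]
          _ = j * t ^ (m + 1) * j * j := by rw [← mul_assoc]
          _ = (t ^ (m + 1))⁻¹ * j := by rw [h1]
      have h0 : (t ^ (m + 1))⁻¹ * j * t ^ (m + 1)
          = (t ^ (m + 1))⁻¹ * ((t ^ (m + 1))⁻¹ * j) := by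
        rw [mul_assoc, ← h2, ← mul_assoc]
      rw [h0]
      have h3 : (t ^ (m + 1))⁻¹ * (t ^ (m + 1))⁻¹ = t⁻¹ := by
        rw [← mul_inv_rev, ← pow_add]
        have : (m + 1) + (m + 1) = n + 1 := by omega
        rw [this, pow_succ, htn, one_mul]
      calc (t ^ (m + 1))⁻¹ * ((t ^ (m + 1))⁻¹ * j)
          = ((t ^ (m + 1))⁻¹ * (t ^ (m + 1))⁻¹) * j := by group
        _ = t⁻¹ * j := by rw [h3]
        _ = (j * i)⁻¹ * j := by rw [ht]
        _ = i⁻¹ * (j⁻¹ * j) := by rw [mul_inv_rev]; group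
        _ = i := by rw [inv_mul_cancel, mul_one, hiinv]
    · rw [← pow_mul]
      have : (m + 1) * 2 = n + 1 := by omega
      rw [this, pow_succ, htn, one_mul, ht]
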